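/- The burning number of the path on n vertices equals ⌈√n⌉. -/

import Mathlib

open SimpleGraph

/-- `x` is a burning sequence for `G`: every vertex is within distance `k - i`
of the source `x i` burned in round `i` (0-indexed: `k - 1 - i`). -/
def IsBurningSeq {V : Type*} (G : SimpleGraph V) {k : ℕ} (x : Fin k → V) : Prop :=
  ∀ v : V, ∃ i : Fin k, G.dist v (x i) ≤ k - 1 - (i : ℕ)

/-- The burning number of `G`. -/
noncomputable def burnNum {V : Type*} (G : SimpleGraph V) : ℕ :=
  sInf {k : ℕ | ∃ x : Fin k → V, IsBurningSeq G x}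

lemma pathGraph_dist_le (n : ℕ) : ∀ d (u v : Fin n), v.val = u.val + d →
    (pathGraph n).dist u v ≤ d := by
  intro d
  induction d with
  | zero =>
    intro u v h
    have : u = v := Fin.ext (by omega)
    simp [this]
  | succ d ih =>
    intro u v h
    have hv := v.isLt
    have hu' : u.val + 1 < n := by omega
    set u' : Fin n := ⟨u.val + 1, hu'⟩ with hu'def
    have hadj : (pathGraph n).Adj u u' := by
      rw [pathGraph_adj]; left; rfl
    have h1 : (pathGraph n).dist u u' ≤ 1 := by
      simpa using SimpleGraph.dist_le (Walk.cons hadj Walk.nil)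
    have h2 := ih u' v (by simp [hu'def]; omega)
    have hconn : (pathGraph n).Connected := by
      have : Nonempty (Fin n) := ⟨u⟩
      exact ⟨pathGraph_preconnected n⟩
    calc (pathGraph n).dist u v ≤ (pathGraph n).dist u u' + (pathGraph n).dist u' v :=
          hconn.dist_triangle
      _ ≤ 1 + d := Nat.add_le_add h1 h2
      _ = d + 1 := by omega

lemma natDist_le_walk_length {n : ℕ} : ∀ {u v : Fin n} (p : (pathGraph n).Walk u v),
    Nat.dist u.val v.val ≤ p.length := by
  intro u v p
  induction p with
  | nil => simp [Nat.dist_self]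
  | @cons a b c h q ih =>
    have hadj := (pathGraph_adj).1 h
    have h1 : Nat.dist a.val b.val ≤ 1 := by
      have : Nat.dist a.val b.val = a.val - b.val + (b.val - a.val) := rfl
      omega
    calc Nat.dist a.val c.val ≤ Nat.dist a.val b.val + Nat.dist b.val c.val :=
          Nat.dist.triangle_inequality _ _ _
      _ ≤ 1 + q.length := Nat.add_le_add h1 ih
      _ = (Walk.cons h q).length := by simp [Walk.length_cons]; omega

lemma pathGraph_dist {n : ℕ} (u v : Fin n) :
    (pathGraph n).dist u v = Nat.dist u.val v.val := by
  apply le_antisymm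
  · rcases le_total u.val v.val with h | h
    · have h1 := pathGraph_dist_le n (v.val - u.val) u v (by omega)
      have h2 : Nat.dist u.val v.val = v.val - u.val := Nat.dist_eq_sub_of_le h
      omega
    · have h1 := pathGraph_dist_le n (u.val - v.val) v u (by omega)
      have h2 : Nat.dist u.val v.val = u.val - v.val := by
        rw [Nat.dist_comm]; exact Nat.dist_eq_sub_of_le h
      rw [SimpleGraph.dist_comm]
      omega
  · have hreach : (pathGraph n).Reachable u v := pathGraph_preconnected n u v
    obtain ⟨p, hp⟩ := hreach.exists_walk_length_eq_dist
    rw [← hp]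
    exact natDist_le_walk_length p

lemma sum_odd (m : ℕ) : ∑ j ∈ Finset.range m, (2 * j + 1) = m * m := by
  induction m with
  | zero => simp
  | succ m ih => rw [Finset.sum_range_succ, ih]; ring

lemma burning_card {n m : ℕ} (x : Fin m → Fin n) (hx : IsBurningSeq (pathGraph n) x) :
    n ≤ m * m := by
  classical
  set B : Fin m → Finset (Fin n) := fun i =>
    Finset.univ.filter (fun v : Fin n => Nat.dist v.val (x i).val ≤ m - 1 - i.val) with hB
  have hsub : (Finset.univ : Finset (Fin n)) ⊆ Finset.univ.biUnion B := by
    intro v _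
    obtain ⟨i, hi⟩ := hx v
    rw [pathGraph_dist] at hi
    exact Finset.mem_biUnion.2 ⟨i, Finset.mem_univ _, by simp [hB, hi]⟩
  have hcard : ∀ i, (B i).card ≤ 2 * (m - 1 - i.val) + 1 := by
    intro i
    have : (B i).card ≤ (Finset.Icc ((x i).val - (m - 1 - i.val)) ((x i).val + (m - 1 - i.val))).card := by
      apply Finset.card_le_card_of_injOn (fun v => v.val)
      · intro v hv
        simp only [hB, Finset.mem_coe, Finset.mem_filter] at hv
        have : Nat.dist v.val (x i).val = v.val - (x i).val + ((x i).val - v.val) := rfl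
        simp only [Finset.mem_coe, Finset.mem_Icc]
        omega
      · intro a _ b _ hab
        exact Fin.ext hab
    rw [Nat.card_Icc] at this
    omega
  have h1 : n ≤ ∑ i : Fin m, (B i).card := by
    calc n = (Finset.univ : Finset (Fin n)).card := by simp
      _ ≤ (Finset.univ.biUnion B).card := Finset.card_le_card hsub
      _ ≤ ∑ i : Fin m, (B i).card := Finset.card_biUnion_le
  have h2 : ∑ i : Fin m, (B i).card ≤ ∑ i : Fin m, (2 * (m - 1 - i.val) + 1) :=
    Finset.sum_le_sum fun i _ => hcard i
  have h3 : ∑ i : Fin m, (2 * (m - 1 - i.val) + 1) = m * m := by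
    rw [Fin.sum_univ_eq_sum_range (fun j => 2 * (m - 1 - j) + 1)]
    have hr := Finset.sum_range_reflect (fun j => 2 * j + 1) m
    rw [hr, sum_odd]
  omega

lemma exists_burning (n : ℕ) (hn : 1 ≤ n) (k : ℕ) (hk : 1 ≤ k) (hnk : n ≤ k * k) :
    ∃ x : Fin k → Fin n, IsBurningSeq (pathGraph n) x := by
  refine ⟨fun i => ⟨min (k * k - (k - i.val) * (k - i.val) + (k - 1 - i.val)) (n - 1),
    by omega⟩, ?_⟩
  intro v
  have hv := v.isLt
  set w := k * k - 1 - v.val with hw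
  set m := Nat.sqrt w with hm
  have hm1 : m * m ≤ w := Nat.sqrt_le w
  have hm2 : w < (m + 1) * (m + 1) := Nat.lt_succ_sqrt w
  have hmk : m + 1 ≤ k := by
    by_contra hc
    push_neg at hc
    have : k * k ≤ m * m := Nat.mul_le_mul (by omega) (by omega)
    omega
  refine ⟨⟨k - 1 - m, by omega⟩, ?_⟩
  rw [pathGraph_dist]
  simp only
  have e1 : k - (k - 1 - m) = m + 1 := by omega
  have e2 : k - 1 - (k - 1 - m) = m := by omega
  rw [e1, e2]
  have hd : ∀ a b : ℕ, Nat.dist a b = a - b + (b - a) := fun a b => rfl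
  rw [hd]
  have ha : (m + 1) * (m + 1) = m * m + 2 * m + 1 := by ring
  omega

/-- The burning number of the path on n vertices equals ⌈√n⌉. -/
theorem burnNum_pathGraph (n : ℕ) (hn : 1 ≤ n) :
    burnNum (SimpleGraph.pathGraph n) = ⌈Real.sqrt n⌉₊ := by
  set k := ⌈Real.sqrt n⌉₊ with hk
  have hsq : (0:ℝ) < Real.sqrt n := Real.sqrt_pos.2 (by exact_mod_cast hn)
  have hk1 : 1 ≤ k := Nat.one_le_iff_ne_zero.2 (by
    simp only [hk]
    exact Nat.pos_iff_ne_zero.1 (Nat.ceil_pos.2 hsq))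
  have hnk : n ≤ k * k := by
    have h1 : Real.sqrt n ≤ k := Nat.le_ceil _
    have h2 : Real.sqrt n * Real.sqrt n = n := Real.mul_self_sqrt (by positivity)
    have : (n : ℝ) ≤ (k : ℝ) * (k : ℝ) := by nlinarith [Real.sqrt_nonneg (n:ℝ)]
    exact_mod_cast this
  have hmem : k ∈ {k : ℕ | ∃ x : Fin k → Fin n, IsBurningSeq (pathGraph n) x} :=
    exists_burning n hn k hk1 hnk
  apply le_antisymm
  · exact Nat.sInf_le hmem
  · apply le_csInf ⟨k, hmem⟩
    rintro m ⟨x, hx⟩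
    have hmm : n ≤ m * m := burning_card x hx
    rw [hk]
    apply Nat.ceil_le.2
    calc Real.sqrt n ≤ Real.sqrt ((m : ℝ) * m) := Real.sqrt_le_sqrt (by exact_mod_cast hmm)
      _ = m := Real.sqrt_mul_self (by positivity)
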